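/- Let $\Psi = |\psi\rangle\langle\psi|$ be a rank-one orthogonal projector on $(\mathbb{C}^2)^{\otimes n}$ with $n = k + m + \ell$. Then $\sum_{W_y \in \mathcal{P}^k} \sum_{W_z \in \mathcal{P}_Z^m} \mathrm{Tr}\big((W_y \otimes W_z \otimes I_\ell)\Psi\big)^2 \le 2^{m+k}$, where $\mathcal{P}^k$ is the set of all $4^k$ $k$-qubit Pauli matrices and $\mathcal{P}_Z^m = \{I,Z\}^{\otimes m}$. -/

import Mathlib

open Matrix Finset Complex Kronecker

/-- Integer-valued dot product of two `𝔽₂` vectors. -/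
def dotVal {n : ℕ} (a b : Fin n → ZMod 2) : ℕ := ∑ j, (a j * b j).val

/-- The `n`-qubit Weyl (Pauli) operator `W_{(a,b)} = i^{a·b} ⊗_j X^{a_j} Z^{b_j}`. -/
def Weyl (n : ℕ) (a b : Fin n → ZMod 2) :
    Matrix (Fin n → ZMod 2) (Fin n → ZMod 2) ℂ :=
  fun x y => if x = a + y then Complex.I ^ dotVal a b * (-1 : ℂ) ^ dotVal b y else 0

namespace PauliAux

lemma zmod2_pow_add (a b : ZMod 2) :
    ((-1:ℂ))^(a+b).val = (-1:ℂ)^a.val * (-1:ℂ)^b.val := by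
  rcases (by decide : ∀ x : ZMod 2, x = 0 ∨ x = 1) a with rfl | rfl <;>
  rcases (by decide : ∀ x : ZMod 2, x = 0 ∨ x = 1) b with rfl | rfl <;>
    simp [show ((1+1:ZMod 2)).val = 0 from rfl, show ((0:ZMod 2)).val = 0 from rfl,
      show ((1:ZMod 2)).val = 1 from rfl, show ((0+1:ZMod 2)).val = 1 from rfl,
      show ((1+0:ZMod 2)).val = 1 from rfl, show ((0+0:ZMod 2)).val = 0 from rfl]

lemma neg_one_pow_dot {k : ℕ} (b u : Fin k → ZMod 2) :
    ((-1:ℂ)) ^ dotVal b u = ∏ j, (-1:ℂ)^((b j * u j).val) :=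
  (Finset.prod_pow_eq_pow_sum _ _ _).symm

lemma dot_mul_combine {k : ℕ} (b u v : Fin k → ZMod 2) :
    (-1:ℂ)^dotVal b u * (-1:ℂ)^dotVal b v = (-1:ℂ)^dotVal b (u+v) := by
  rw [neg_one_pow_dot, neg_one_pow_dot, neg_one_pow_dot, ← Finset.prod_mul_distrib]
  refine Finset.prod_congr rfl fun j _ => ?_
  rw [Pi.add_apply, mul_add, zmod2_pow_add]

lemma sum_neg_one_pow_dot (k : ℕ) (u : Fin k → ZMod 2) :
    ∑ b : Fin k → ZMod 2, ((-1:ℂ)) ^ dotVal b u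
      = if u = 0 then (2:ℂ)^k else 0 := by
  simp only [neg_one_pow_dot]
  rw [← Fintype.piFinset_univ, ← Finset.prod_univ_sum (fun _ => Finset.univ)
    (fun j t => (-1:ℂ)^((t * u j).val))]
  have h1 : ∀ j, (∑ t : ZMod 2, (-1:ℂ)^((t * u j).val))
      = if u j = 0 then 2 else 0 := by
    intro j
    rw [show (Finset.univ : Finset (ZMod 2)) = {0, 1} from by decide,
      Finset.sum_insert (by decide), Finset.sum_singleton]
    have : ∀ x : ZMod 2, x = 0 ∨ x = 1 := by decide
    rcases this (u j) with h | h <;>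
      simp [h, show ((0:ZMod 2)).val = 0 from rfl, show ((1:ZMod 2)).val = 1 from rfl]
    norm_num
  simp only [h1]
  by_cases h : u = 0
  · simp [h]
  · obtain ⟨j, hj⟩ : ∃ j, u j ≠ 0 := by
      by_contra hc; push_neg at hc; exact h (funext hc)
    rw [if_neg h]
    exact Finset.prod_eq_zero (Finset.mem_univ j) (by simp [hj])

lemma sum_pair_orth (k : ℕ) (u v : Fin k → ZMod 2) :
    ∑ b : Fin k → ZMod 2, (-1:ℂ)^dotVal b u * (-1:ℂ)^dotVal b v
      = if u = v then (2:ℂ)^k else 0 := by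
  simp only [dot_mul_combine]
  rw [sum_neg_one_pow_dot]
  congr 1
  have h2 : ∀ a b : ZMod 2, a + b = 0 ↔ a = b := by decide
  simp only [eq_iff_iff, funext_iff, Pi.add_apply, Pi.zero_apply]
  constructor <;> intro h j <;> [exact ((h2 _ _).mp (h j)); exact ((h2 _ _).mpr (h j))]

lemma dotVal_zero_left {n : ℕ} (c : Fin n → ZMod 2) : dotVal 0 c = 0 := by
  simp [dotVal]

lemma normSq_eq_mul_star (z : ℂ) : (Complex.normSq z : ℂ) = z * star z := by
  rw [Complex.star_def]
  exact (Complex.mul_conj z).symm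

lemma star_neg_one_pow (n : ℕ) : star ((-1:ℂ)^n) = (-1:ℂ)^n := by simp

lemma sum_swap4 {A B C D M : Type*} [Fintype A] [Fintype B] [Fintype C] [Fintype D]
    [AddCommMonoid M] (F : A → B → C → D → M) :
    ∑ b : A, ∑ c : B, ∑ y : C, ∑ y' : D, F b c y y'
      = ∑ y : C, ∑ y' : D, ∑ b : A, ∑ c : B, F b c y y' :=
  calc ∑ b : A, ∑ c : B, ∑ y : C, ∑ y' : D, F b c y y'
      = ∑ b : A, ∑ y : C, ∑ c : B, ∑ y' : D, F b c y y' :=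
        Finset.sum_congr rfl fun _ _ => Finset.sum_comm
    _ = ∑ y : C, ∑ b : A, ∑ c : B, ∑ y' : D, F b c y y' := Finset.sum_comm
    _ = ∑ y : C, ∑ b : A, ∑ y' : D, ∑ c : B, F b c y y' :=
        Finset.sum_congr rfl fun _ _ => Finset.sum_congr rfl fun _ _ => Finset.sum_comm
    _ = ∑ y : C, ∑ y' : D, ∑ b : A, ∑ c : B, F b c y y' :=
        Finset.sum_congr rfl fun _ _ => Finset.sum_comm

lemma factor_aux {A B : Type*} [Fintype A] [Fintype B] (P : A → ℂ) (Q : B → ℂ) (G : ℂ) :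
    ∑ b : A, ∑ c : B, P b * (Q c * G) = (∑ b, P b) * ((∑ c, Q c) * G) := by
  simp only [Finset.mul_sum, Finset.sum_mul]
  rw [Finset.sum_comm]

variable (k m ℓ : ℕ)
  (ψ : (Fin k → ZMod 2) × (Fin m → ZMod 2) × (Fin ℓ → ZMod 2) → ℂ)

/-- `S a b c = ∑_y (-1)^{b·y₁}(-1)^{c·y₂} ψ(y) conj ψ(a+y₁,y₂,y₃)`. -/
noncomputable def auxS (a b : Fin k → ZMod 2) (c : Fin m → ZMod 2) : ℂ :=
  ∑ y : (Fin k → ZMod 2) × (Fin m → ZMod 2) × (Fin ℓ → ZMod 2),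
    (-1:ℂ)^(dotVal b y.1) * (-1:ℂ)^(dotVal c y.2.1)
      * (ψ y * star (ψ (a + y.1, y.2.1, y.2.2)))

/-- two-point correlation. -/
noncomputable def auxG (a : Fin k → ZMod 2)
    (y y' : (Fin k → ZMod 2) × (Fin m → ZMod 2) × (Fin ℓ → ZMod 2)) : ℂ :=
  (ψ y * star (ψ (a + y.1, y.2.1, y.2.2))) *
    star (ψ y' * star (ψ (a + y'.1, y'.2.1, y'.2.2)))

/-- reduced-matrix entry. -/
noncomputable def auxρ (a y1 : Fin k → ZMod 2) (y2 : Fin m → ZMod 2) : ℂ :=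
  ∑ w, ψ (y1, y2, w) * star (ψ (a + y1, y2, w))

lemma trace_eq (a b : Fin k → ZMod 2) (c : Fin m → ZMod 2) :
    ((Weyl k a b ⊗ₖ (Weyl m 0 c ⊗ₖ
        (1 : Matrix (Fin ℓ → ZMod 2) (Fin ℓ → ZMod 2) ℂ))) *
      Matrix.vecMulVec ψ (star ψ)).trace
    = Complex.I ^ dotVal a b * auxS k m ℓ ψ a b c := by
  rw [Matrix.trace, auxS]
  simp only [Matrix.diag_apply, Matrix.mul_apply, Matrix.vecMulVec_apply, Pi.star_apply]
  rw [Finset.sum_comm, Finset.mul_sum]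
  refine Finset.sum_congr rfl fun y _ => ?_
  rw [Fintype.sum_eq_single ((a + y.1, y.2.1, y.2.2) :
      (Fin k → ZMod 2) × (Fin m → ZMod 2) × (Fin ℓ → ZMod 2))]
  · simp [Weyl, Matrix.kroneckerMap_apply, Matrix.one_apply, dotVal_zero_left]
    ring
  · intro x hx
    have h3 : x.1 ≠ a + y.1 ∨ x.2.1 ≠ y.2.1 ∨ x.2.2 ≠ y.2.2 := by
      by_contra h; push_neg at h
      exact hx (Prod.ext h.1 (Prod.ext h.2.1 h.2.2))
    rcases h3 with h|h|h <;>
      simp [Weyl, Matrix.kroneckerMap_apply, Matrix.one_apply, h]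

lemma key (a : Fin k → ZMod 2) :
    ∑ b : Fin k → ZMod 2, ∑ c : Fin m → ZMod 2,
        (Complex.normSq (auxS k m ℓ ψ a b c) : ℂ)
      = (2:ℂ)^k * (2:ℂ)^m * ∑ y1 : Fin k → ZMod 2, ∑ y2 : Fin m → ZMod 2,
          (Complex.normSq (auxρ k m ℓ ψ a y1 y2) : ℂ) := by
  have expand : ∀ (b : Fin k → ZMod 2) (c : Fin m → ZMod 2),
      (Complex.normSq (auxS k m ℓ ψ a b c) : ℂ)
      = ∑ y : (Fin k → ZMod 2) × (Fin m → ZMod 2) × (Fin ℓ → ZMod 2),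
        ∑ y' : (Fin k → ZMod 2) × (Fin m → ZMod 2) × (Fin ℓ → ZMod 2),
          ((-1:ℂ)^(dotVal b y.1) * (-1:ℂ)^(dotVal b y'.1)) *
            (((-1:ℂ)^(dotVal c y.2.1) * (-1:ℂ)^(dotVal c y'.2.1)) *
              auxG k m ℓ ψ a y y') := by
    intro b c
    rw [normSq_eq_mul_star, auxS, star_sum, Finset.sum_mul_sum]
    refine Finset.sum_congr rfl fun y _ => Finset.sum_congr rfl fun y' _ => ?_
    simp only [star_mul', star_neg_one_pow, auxG]
    ring
  simp only [expand]
  rw [sum_swap4]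
  have hfac : ∀ y y' : (Fin k → ZMod 2) × (Fin m → ZMod 2) × (Fin ℓ → ZMod 2),
      (∑ b : Fin k → ZMod 2, ∑ c : Fin m → ZMod 2,
        ((-1:ℂ)^(dotVal b y.1) * (-1:ℂ)^(dotVal b y'.1)) *
          (((-1:ℂ)^(dotVal c y.2.1) * (-1:ℂ)^(dotVal c y'.2.1)) * auxG k m ℓ ψ a y y'))
      = (if y.1 = y'.1 then (2:ℂ)^k else 0) *
          ((if y.2.1 = y'.2.1 then (2:ℂ)^m else 0) * auxG k m ℓ ψ a y y') := by
    intro y y'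
    rw [factor_aux, sum_pair_orth, sum_pair_orth]
  simp only [hfac]
  simp only [Fintype.sum_prod_type]
  simp only [mul_ite, mul_zero, ite_mul, zero_mul, Finset.sum_ite_irrel,
    Finset.sum_const_zero, Finset.sum_ite_eq, Finset.mem_univ, if_true]
  rw [Finset.mul_sum]
  refine Finset.sum_congr rfl fun y1 _ => ?_
  rw [Finset.mul_sum]
  refine Finset.sum_congr rfl fun y2 _ => ?_
  rw [normSq_eq_mul_star, auxρ, star_sum, Finset.sum_mul_sum, Finset.mul_sum]
  refine Finset.sum_congr rfl fun y3 _ => ?_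
  rw [Finset.mul_sum]
  refine Finset.sum_congr rfl fun y3' _ => ?_
  simp only [auxG, star_mul', star_star]
  ring

lemma keyR (a : Fin k → ZMod 2) :
    ∑ b : Fin k → ZMod 2, ∑ c : Fin m → ZMod 2, Complex.normSq (auxS k m ℓ ψ a b c)
      = (2:ℝ)^k * (2:ℝ)^m * ∑ y1 : Fin k → ZMod 2, ∑ y2 : Fin m → ZMod 2,
          Complex.normSq (auxρ k m ℓ ψ a y1 y2) := by
  have h := key k m ℓ ψ a
  have h2 : ((∑ b : Fin k → ZMod 2, ∑ c : Fin m → ZMod 2,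
        Complex.normSq (auxS k m ℓ ψ a b c) : ℝ) : ℂ)
      = (((2:ℝ)^k * (2:ℝ)^m * ∑ y1 : Fin k → ZMod 2, ∑ y2 : Fin m → ZMod 2,
          Complex.normSq (auxρ k m ℓ ψ a y1 y2) : ℝ) : ℂ) := by
    push_cast
    exact h
  exact_mod_cast h2

lemma rho_bound (a y1 : Fin k → ZMod 2) (y2 : Fin m → ZMod 2) :
    Complex.normSq (auxρ k m ℓ ψ a y1 y2)
      ≤ (∑ w, ‖ψ (y1, y2, w)‖^2) * (∑ w, ‖ψ (a + y1, y2, w)‖^2) := by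
  have h1 : ‖auxρ k m ℓ ψ a y1 y2‖ ≤ ∑ w, ‖ψ (y1, y2, w)‖ * ‖ψ (a + y1, y2, w)‖ := by
    refine (norm_sum_le _ _).trans ?_
    refine Finset.sum_le_sum fun w _ => ?_
    rw [norm_mul, norm_star]
  have h2 : Complex.normSq (auxρ k m ℓ ψ a y1 y2) = ‖auxρ k m ℓ ψ a y1 y2‖^2 := by
    rw [Complex.normSq_eq_norm_sq]
  rw [h2]
  calc ‖auxρ k m ℓ ψ a y1 y2‖^2
      ≤ (∑ w, ‖ψ (y1, y2, w)‖ * ‖ψ (a + y1, y2, w)‖)^2 :=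
        pow_le_pow_left₀ (norm_nonneg _) h1 2
    _ ≤ _ := Finset.sum_mul_sq_le_sq_mul_sq _ _ _

lemma step1 (a b : Fin k → ZMod 2) (c : Fin m → ZMod 2) :
    (((Weyl k a b ⊗ₖ (Weyl m 0 c ⊗ₖ
        (1 : Matrix (Fin ℓ → ZMod 2) (Fin ℓ → ZMod 2) ℂ))) *
      Matrix.vecMulVec ψ (star ψ)).trace.re)^2
      ≤ Complex.normSq (auxS k m ℓ ψ a b c) := by
  rw [trace_eq]
  have h1 : ∀ z : ℂ, (z.re)^2 ≤ Complex.normSq z := fun z => by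
    rw [Complex.normSq_apply]; nlinarith [sq_nonneg z.im]
  calc ((Complex.I ^ dotVal a b * auxS k m ℓ ψ a b c).re)^2
      ≤ Complex.normSq (Complex.I ^ dotVal a b * auxS k m ℓ ψ a b c) := h1 _
    _ = Complex.normSq (auxS k m ℓ ψ a b c) := by
        rw [Complex.normSq_mul, map_pow, Complex.normSq_I, one_pow, one_mul]

end PauliAux

open PauliAux in
/-- For a rank-one projector `Ψ = |ψ⟩⟨ψ|` on `n = k + m + ℓ` qubits,
`∑_{W_y ∈ 𝒫^k} ∑_{W_z ∈ 𝒫_Z^m} Tr((W_y ⊗ W_z ⊗ I_ℓ) Ψ)² ≤ 2^{m+k}`. -/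
theorem sum_sq_trace_pauli_block_le (k m ℓ : ℕ)
    (ψ : (Fin k → ZMod 2) × (Fin m → ZMod 2) × (Fin ℓ → ZMod 2) → ℂ)
    (hψ : ∑ x, ‖ψ x‖ ^ 2 = 1) :
    ∑ a : Fin k → ZMod 2, ∑ b : Fin k → ZMod 2, ∑ c : Fin m → ZMod 2,
        (((Weyl k a b ⊗ₖ (Weyl m 0 c ⊗ₖ
            (1 : Matrix (Fin ℓ → ZMod 2) (Fin ℓ → ZMod 2) ℂ))) *
          Matrix.vecMulVec ψ (star ψ)).trace.re) ^ 2
      ≤ (2 : ℝ) ^ (m + k) := by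
  classical
  have hψ' : ∑ y2 : Fin m → ZMod 2, ∑ u : Fin k → ZMod 2, ∑ w, ‖ψ (u, y2, w)‖^2 = 1 := by
    rw [← hψ]
    simp only [Fintype.sum_prod_type]
    exact Finset.sum_comm
  have hp0 : ∀ (u : Fin k → ZMod 2) (v : Fin m → ZMod 2),
      (0:ℝ) ≤ ∑ w, ‖ψ (u, v, w)‖^2 :=
    fun u v => Finset.sum_nonneg fun _ _ => sq_nonneg _
  have hq0 : ∀ v : Fin m → ZMod 2,
      (0:ℝ) ≤ ∑ u : Fin k → ZMod 2, ∑ w, ‖ψ (u, v, w)‖^2 :=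
    fun v => Finset.sum_nonneg fun u _ => hp0 u v
  have hq1 : ∀ v : Fin m → ZMod 2,
      (∑ u : Fin k → ZMod 2, ∑ w, ‖ψ (u, v, w)‖^2) ≤ 1 := by
    intro v
    rw [← hψ']
    exact Finset.single_le_sum (f := fun v => ∑ u : Fin k → ZMod 2, ∑ w, ‖ψ (u, v, w)‖^2)
      (fun i _ => hq0 i) (Finset.mem_univ v)
  have htotal : ∑ a : Fin k → ZMod 2, ∑ y1 : Fin k → ZMod 2, ∑ y2 : Fin m → ZMod 2,
      (∑ w, ‖ψ (y1, y2, w)‖^2) * (∑ w, ‖ψ (a + y1, y2, w)‖^2) ≤ 1 := by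
    have heq : ∑ a : Fin k → ZMod 2, ∑ y1 : Fin k → ZMod 2, ∑ y2 : Fin m → ZMod 2,
        (∑ w, ‖ψ (y1, y2, w)‖^2) * (∑ w, ‖ψ (a + y1, y2, w)‖^2)
        = ∑ y1 : Fin k → ZMod 2, ∑ y2 : Fin m → ZMod 2,
            (∑ w, ‖ψ (y1, y2, w)‖^2) * (∑ u : Fin k → ZMod 2, ∑ w, ‖ψ (u, y2, w)‖^2) := by
      rw [Finset.sum_comm]
      refine Finset.sum_congr rfl fun y1 _ => ?_
      rw [Finset.sum_comm]
      refine Finset.sum_congr rfl fun y2 _ => ?_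
      rw [← Finset.mul_sum]
      congr 1
      exact Fintype.sum_equiv (Equiv.addRight y1) _ _ (fun _ => rfl)
    rw [heq]
    calc ∑ y1 : Fin k → ZMod 2, ∑ y2 : Fin m → ZMod 2,
        (∑ w, ‖ψ (y1, y2, w)‖^2) * (∑ u : Fin k → ZMod 2, ∑ w, ‖ψ (u, y2, w)‖^2)
        ≤ ∑ y1 : Fin k → ZMod 2, ∑ y2 : Fin m → ZMod 2, (∑ w, ‖ψ (y1, y2, w)‖^2) := by
          refine Finset.sum_le_sum fun y1 _ => Finset.sum_le_sum fun y2 _ => ?_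
          calc (∑ w, ‖ψ (y1, y2, w)‖^2) * (∑ u : Fin k → ZMod 2, ∑ w, ‖ψ (u, y2, w)‖^2)
              ≤ (∑ w, ‖ψ (y1, y2, w)‖^2) * 1 :=
                mul_le_mul_of_nonneg_left (hq1 y2) (hp0 y1 y2)
            _ = ∑ w, ‖ψ (y1, y2, w)‖^2 := mul_one _
      _ = 1 := by rw [Finset.sum_comm]; exact hψ'
  have hstep : ∀ a : Fin k → ZMod 2,
      ∑ b : Fin k → ZMod 2, ∑ c : Fin m → ZMod 2,
        (((Weyl k a b ⊗ₖ (Weyl m 0 c ⊗ₖ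
            (1 : Matrix (Fin ℓ → ZMod 2) (Fin ℓ → ZMod 2) ℂ))) *
          Matrix.vecMulVec ψ (star ψ)).trace.re) ^ 2
      ≤ (2:ℝ)^k * (2:ℝ)^m * ∑ y1 : Fin k → ZMod 2, ∑ y2 : Fin m → ZMod 2,
          (∑ w, ‖ψ (y1, y2, w)‖^2) * (∑ w, ‖ψ (a + y1, y2, w)‖^2) := by
    intro a
    calc ∑ b : Fin k → ZMod 2, ∑ c : Fin m → ZMod 2,
        (((Weyl k a b ⊗ₖ (Weyl m 0 c ⊗ₖ
            (1 : Matrix (Fin ℓ → ZMod 2) (Fin ℓ → ZMod 2) ℂ))) *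
          Matrix.vecMulVec ψ (star ψ)).trace.re) ^ 2
        ≤ ∑ b : Fin k → ZMod 2, ∑ c : Fin m → ZMod 2,
            Complex.normSq (auxS k m ℓ ψ a b c) :=
          Finset.sum_le_sum fun b _ => Finset.sum_le_sum fun c _ => step1 k m ℓ ψ a b c
      _ = (2:ℝ)^k * (2:ℝ)^m * ∑ y1 : Fin k → ZMod 2, ∑ y2 : Fin m → ZMod 2,
            Complex.normSq (auxρ k m ℓ ψ a y1 y2) := keyR k m ℓ ψ a
      _ ≤ _ := by
          refine mul_le_mul_of_nonneg_left ?_ (by positivity)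
          exact Finset.sum_le_sum fun y1 _ => Finset.sum_le_sum fun y2 _ =>
            rho_bound k m ℓ ψ a y1 y2
  calc ∑ a : Fin k → ZMod 2, ∑ b : Fin k → ZMod 2, ∑ c : Fin m → ZMod 2,
        (((Weyl k a b ⊗ₖ (Weyl m 0 c ⊗ₖ
            (1 : Matrix (Fin ℓ → ZMod 2) (Fin ℓ → ZMod 2) ℂ))) *
          Matrix.vecMulVec ψ (star ψ)).trace.re) ^ 2
      ≤ ∑ a : Fin k → ZMod 2, (2:ℝ)^k * (2:ℝ)^m *
          ∑ y1 : Fin k → ZMod 2, ∑ y2 : Fin m → ZMod 2,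
            (∑ w, ‖ψ (y1, y2, w)‖^2) * (∑ w, ‖ψ (a + y1, y2, w)‖^2) :=
        Finset.sum_le_sum fun a _ => hstep a
    _ = (2:ℝ)^k * (2:ℝ)^m * ∑ a : Fin k → ZMod 2,
          ∑ y1 : Fin k → ZMod 2, ∑ y2 : Fin m → ZMod 2,
            (∑ w, ‖ψ (y1, y2, w)‖^2) * (∑ w, ‖ψ (a + y1, y2, w)‖^2) :=
        (Finset.mul_sum _ _ _).symm
    _ ≤ (2:ℝ)^k * (2:ℝ)^m * 1 := mul_le_mul_of_nonneg_left htotal (by positivity)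
    _ = (2:ℝ)^(m+k) := by rw [pow_add]; ring
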